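/- Breaker has a strategy to prevent Maker from creating a cyclic (directed) triangle in the unbiased T_C-tournament game played on the edge set of the complete graph K₄, even if Maker is allowed to claim and orient two edges in her first turn (and one edge per turn thereafter). -/

import Mathlib

namespace TournamentGame

variable {V : Type*} [DecidableEq V]

/-- The underlying undirected edges of a set of oriented edges. -/
def undirect (M : Finset (V × V)) : Finset (Sym2 V) :=
  M.image fun p => s(p.1, p.2)

/-- `MakerWin X F b M B` : in the (1:b) Maker-Breaker game on board `X`, with Maker
having claimed `M`, Breaker having claimed `B`, and Maker to move, Maker has a strategy
to claim all edges of some winning set (i.e. reach a position with `F` on her edges). -/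
inductive MakerWin (X : Finset (Sym2 V)) (F : Finset (Sym2 V) → Prop) (b : ℕ) :
    Finset (Sym2 V) → Finset (Sym2 V) → Prop
  | win (M B : Finset (Sym2 V)) : F M → MakerWin X F b M B
  | move (M B : Finset (Sym2 V)) (e : Sym2 V) (heX : e ∈ X) (hefree : e ∉ M ∪ B)
      (h : ∀ B' : Finset (Sym2 V), B' ⊆ X \ (insert e M ∪ B) →
        B'.card = min b (X \ (insert e M ∪ B)).card →
        MakerWin X F b (insert e M) (B ∪ B')) :
      MakerWin X F b M B

/-- `BreakerBlock X F b M B` : Maker to move; Breaker has a strategy ensuring that `F`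
never holds on Maker's edge set. -/
inductive BreakerBlock (X : Finset (Sym2 V)) (F : Finset (Sym2 V) → Prop) (b : ℕ) :
    Finset (Sym2 V) → Finset (Sym2 V) → Prop
  | step (M B : Finset (Sym2 V)) (hF : ¬ F M) (resp : Sym2 V → Finset (Sym2 V))
      (hsub : ∀ e ∈ X, e ∉ M ∪ B → resp e ⊆ X \ (insert e M ∪ B))
      (hcard : ∀ e ∈ X, e ∉ M ∪ B → (resp e).card = min b (X \ (insert e M ∪ B)).card)
      (h : ∀ e ∈ X, e ∉ M ∪ B → BreakerBlock X F b (insert e M) (B ∪ resp e)) :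
      BreakerBlock X F b M B

/-- Oriented (tournament-game) version of `MakerWin`: Maker claims an edge together with
an orientation; her position is a set of oriented edges. -/
inductive OMakerWin (X : Finset (Sym2 V)) (F : Finset (V × V) → Prop) (b : ℕ) :
    Finset (V × V) → Finset (Sym2 V) → Prop
  | win (M : Finset (V × V)) (B : Finset (Sym2 V)) : F M → OMakerWin X F b M B
  | move (M : Finset (V × V)) (B : Finset (Sym2 V)) (x y : V)
      (heX : s(x, y) ∈ X) (hefree : s(x, y) ∉ undirect M ∪ B)
      (h : ∀ B' : Finset (Sym2 V), B' ⊆ X \ (insert s(x, y) (undirect M) ∪ B) →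
        B'.card = min b (X \ (insert s(x, y) (undirect M) ∪ B)).card →
        OMakerWin X F b (insert (x, y) M) (B ∪ B')) :
      OMakerWin X F b M B

/-- Oriented version of `BreakerBlock`. -/
inductive OBreakerBlock (X : Finset (Sym2 V)) (F : Finset (V × V) → Prop) (b : ℕ) :
    Finset (V × V) → Finset (Sym2 V) → Prop
  | step (M : Finset (V × V)) (B : Finset (Sym2 V)) (hF : ¬ F M)
      (resp : V → V → Finset (Sym2 V))
      (hsub : ∀ x y : V, s(x, y) ∈ X → s(x, y) ∉ undirect M ∪ B →
        resp x y ⊆ X \ (insert s(x, y) (undirect M) ∪ B))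
      (hcard : ∀ x y : V, s(x, y) ∈ X → s(x, y) ∉ undirect M ∪ B →
        (resp x y).card = min b (X \ (insert s(x, y) (undirect M) ∪ B)).card)
      (h : ∀ x y : V, s(x, y) ∈ X → s(x, y) ∉ undirect M ∪ B →
        OBreakerBlock X F b (insert (x, y) M) (B ∪ resp x y)) :
      OBreakerBlock X F b M B

/-- Position with Breaker to move, in the unoriented game: Breaker can respond and
then keep blocking forever. -/
def BreakerTurn (X : Finset (Sym2 V)) (F : Finset (Sym2 V) → Prop) (b : ℕ)
    (M B : Finset (Sym2 V)) : Prop :=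
  ¬ F M ∧ ∃ B' : Finset (Sym2 V), B' ⊆ X \ (M ∪ B) ∧
    B'.card = min b (X \ (M ∪ B)).card ∧ BreakerBlock X F b M (B ∪ B')

/-- Position with Breaker to move, in the oriented game. -/
def OBreakerTurn (X : Finset (Sym2 V)) (F : Finset (V × V) → Prop) (b : ℕ)
    (M : Finset (V × V)) (B : Finset (Sym2 V)) : Prop :=
  ¬ F M ∧ ∃ B' : Finset (Sym2 V), B' ⊆ X \ (undirect M ∪ B) ∧
    B'.card = min b (X \ (undirect M ∪ B)).card ∧ OBreakerBlock X F b M (B ∪ B')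

/-- Winning sets of the triangle game. -/
def HasTriangle (M : Finset (Sym2 V)) : Prop :=
  ∃ x y z : V, x ≠ y ∧ y ≠ z ∧ x ≠ z ∧ s(x, y) ∈ M ∧ s(y, z) ∈ M ∧ s(x, z) ∈ M

/-- Maker's oriented edges contain a cyclic (directed) triangle. -/
def HasCyclicTriangle (M : Finset (V × V)) : Prop :=
  ∃ x y z : V, x ≠ y ∧ y ≠ z ∧ x ≠ z ∧ (x, y) ∈ M ∧ (y, z) ∈ M ∧ (z, x) ∈ M

/-- Maker's oriented edges contain an acyclic (transitive) triangle. -/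
def HasAcyclicTriangle (M : Finset (V × V)) : Prop :=
  ∃ x y z : V, x ≠ y ∧ y ≠ z ∧ x ≠ z ∧ (x, y) ∈ M ∧ (y, z) ∈ M ∧ (x, z) ∈ M

/-- A tournament on `Fin k`, given by its arc relation. -/
def IsTournament {k : ℕ} (T : Fin k → Fin k → Prop) : Prop :=
  (∀ i, ¬ T i i) ∧ ∀ i j : Fin k, i ≠ j → (T i j ↔ ¬ T j i)

/-- Maker's oriented edges contain a copy of the tournament `T`. -/
def HasTCopy {k : ℕ} (T : Fin k → Fin k → Prop) (M : Finset (V × V)) : Prop :=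
  ∃ f : Fin k → V, Function.Injective f ∧ ∀ i j : Fin k, T i j → (f i, f j) ∈ M

/-- The edge set of the complete graph `K_n`. -/
def completeEdges (n : ℕ) : Finset (Sym2 (Fin n)) :=
  Finset.univ.filter fun e => ¬ e.IsDiag

/-- The edge set of the Turán graph `T_{n,k}` : classes are residues mod `k`. -/
def turanEdges (n k : ℕ) : Finset (Sym2 (Fin n)) :=
  Finset.univ.filter fun e => ¬ (e.map fun v : Fin n => v.val % k).IsDiag

/-- `A` contains a good copy of `K_k` (all vertices in distinct classes of `T_{n,k}`). -/
def GoodCopy (n k : ℕ) (A : Finset (Sym2 (Fin n))) : Prop :=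
  ∃ f : Fin k → Fin n, Function.Injective f ∧
    (∀ i j : Fin k, i ≠ j → (f i).val % k ≠ (f j).val % k) ∧
    (∀ i j : Fin k, i ≠ j → s(f i, f j) ∈ A)

open Classical in
/-- Probability that a `p`-random subset `A` of `E` (each element kept independently with
probability `p`) satisfies `P`. This is the model `G(E, p)`. -/
noncomputable def edgeProb {α : Type*} [DecidableEq α] (E : Finset α) (p : ℝ)
    (P : Finset α → Prop) : ℝ :=
  ∑ A ∈ E.powerset, if P A then p ^ A.card * (1 - p) ^ (E.card - A.card) else 0

open Classical in
/-- Probability that a uniformly random `M`-element subset of `E` satisfies `P`.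
This is the model `G(E, M)`. -/
noncomputable def uniformProb {α : Type*} [DecidableEq α] (E : Finset α) (M : ℕ)
    (P : Finset α → Prop) : ℝ :=
  ((E.powerset.filter fun A => A.card = M ∧ P A).card : ℝ) /
    ((E.powerset.filter fun A => A.card = M).card : ℝ)

/-- The three edges of a triangle on `x`, `y`, `z`. -/
def triEdges (x y z : V) : Finset (Sym2 V) := {s(x, y), s(y, z), s(x, z)}

/-- `x`, `y`, `z` form a triangle of the graph with edge set `A`. -/
def IsTriangleIn (A : Finset (Sym2 V)) (x y z : V) : Prop :=
  x ≠ y ∧ y ≠ z ∧ x ≠ z ∧ s(x, y) ∈ A ∧ s(y, z) ∈ A ∧ s(x, z) ∈ A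

/-- The triangles of `A`, each recorded as its set of three edges: the vertex set of `T_A`. -/
def TriSets (A : Finset (Sym2 V)) : Set (Finset (Sym2 V)) :=
  {t | ∃ x y z : V, IsTriangleIn A x y z ∧ t = triEdges x y z}

/-- `C` is a triangle collection: every edge lies in a triangle and the graph `T_C` of
triangles (adjacent iff sharing an edge) is connected. -/
def IsTriangleCollection (C : Finset (Sym2 V)) : Prop :=
  (∀ e ∈ C, ∃ x y z : V, IsTriangleIn C x y z ∧ e ∈ triEdges x y z) ∧
  ∀ t ∈ TriSets C, ∀ t' ∈ TriSets C,
    Relation.ReflTransGen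
      (fun a b => a ∈ TriSets C ∧ b ∈ TriSets C ∧ (a ∩ b).Nonempty) t t'

/-- Adjacency of `K₃⁺`: a triangle on `{0,1,2}` with a pendant edge `{2,3}`. -/
def K3plusAdj (a b : Fin 4) : Prop :=
  (a.val < 3 ∧ b.val < 3 ∧ a ≠ b) ∨ (a.val = 2 ∧ b.val = 3) ∨ (a.val = 3 ∧ b.val = 2)

/-- Adjacency of the path on `Fin m`. -/
def pathAdj {m : ℕ} (a b : Fin m) : Prop := a.val + 1 = b.val ∨ b.val + 1 = a.val

/-- `C` is very basic: `T_C` is (isomorphic to) a subgraph of `K₃⁺` or of a path `P_m`. -/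
def VeryBasic (C : Finset (Sym2 V)) : Prop :=
  (∃ φ : TriSets C → Fin 4, Function.Injective φ ∧
    ∀ t t' : TriSets C, t ≠ t' → ((t : Finset (Sym2 V)) ∩ (t' : Finset (Sym2 V))).Nonempty →
      K3plusAdj (φ t) (φ t')) ∨
  (∃ m : ℕ, ∃ φ : TriSets C → Fin m, Function.Injective φ ∧
    ∀ t t' : TriSets C, t ≠ t' → ((t : Finset (Sym2 V)) ∩ (t' : Finset (Sym2 V))).Nonempty →
      pathAdj (φ t) (φ t'))

/-- `C` is basic: there are distinct edges `e₁, e₂` with `C - eᵢ` very basic for both. -/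
def Basic (C : Finset (Sym2 V)) : Prop :=
  ∃ e₁ ∈ C, ∃ e₂ ∈ C, e₁ ≠ e₂ ∧ VeryBasic (C.erase e₁) ∧ VeryBasic (C.erase e₂)

open Classical in
/-- The set of non-isolated vertices of the graph with edge set `C`. -/
noncomputable def support [Fintype V] (C : Finset (Sym2 V)) : Finset V :=
  Finset.univ.filter fun v => ∃ e ∈ C, v ∈ e

open Classical in
/-- Degree of `v` in the graph with edge set `C`. -/
noncomputable def degreeIn (C : Finset (Sym2 V)) (v : V) : ℕ :=
  (C.filter fun e => v ∈ e).card

/-- The maximum density `m(C) = max_{H ⊆ C} e(H)/v(H)` is (strictly) less than `r`. -/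
def MaxDensityLt [Fintype V] (C : Finset (Sym2 V)) (r : ℝ) : Prop :=
  ∀ D ⊆ C, D.Nonempty → (D.card : ℝ) / ((support D).card : ℝ) < r

/-- The edge set of the `k`-wheel: a cycle on `{0, …, k-1} ⊆ Fin (k+1)` together with
all edges to the center, the vertex `k`. -/
def wheelEdges (k : ℕ) : Finset (Sym2 (Fin (k + 1))) :=
  ((Finset.univ : Finset (Fin k)).image fun i =>
    s((⟨i.val, by have := i.2; omega⟩ : Fin (k + 1)),
      (⟨(i.val + 1) % k, by have := i.2; exact Nat.lt_succ_of_lt (Nat.mod_lt _ (by omega))⟩ :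
        Fin (k + 1)))) ∪
  ((Finset.univ : Finset (Fin k)).image fun i =>
    s((⟨i.val, by have := i.2; omega⟩ : Fin (k + 1)), (Fin.last k)))


section Aux

variable [Fintype V]

/-- Candidate Breaker responses of size `min 1 s.card` within the free set `s`. -/
def cands (s : Finset (Sym2 V)) : Finset (Finset (Sym2 V)) :=
  if s = ∅ then {∅} else s.image fun e => {e}

lemma cands_spec {s B' : Finset (Sym2 V)} (h : B' ∈ cands s) :
    B' ⊆ s ∧ B'.card = min 1 s.card := by
  unfold cands at h
  split_ifs at h with hs
  · simp only [Finset.mem_singleton] at h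
    subst h hs
    simp
  · simp only [Finset.mem_image] at h
    obtain ⟨e, he, rfl⟩ := h
    have : 1 ≤ s.card := Finset.card_pos.mpr ⟨e, he⟩
    constructor
    · simpa using he
    · simp [Nat.min_eq_left this]

/-- Bounded-depth boolean evaluation of `OBreakerBlock` with bias 1. -/
def blockF (F : Finset (V × V) → Bool) (X : Finset (Sym2 V)) :
    ℕ → Finset (V × V) → Finset (Sym2 V) → Bool
  | 0, _, _ => false
  | n + 1, M, B =>
    !F M &&
      decide (∀ p : V × V, s(p.1, p.2) ∈ X → s(p.1, p.2) ∉ undirect M ∪ B →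
        ∃ B' ∈ cands (X \ (insert s(p.1, p.2) (undirect M) ∪ B)),
          blockF F X n (insert p M) (B ∪ B') = true)

def turnF (F : Finset (V × V) → Bool) (X : Finset (Sym2 V)) (n : ℕ)
    (M : Finset (V × V)) (B : Finset (Sym2 V)) : Bool :=
  !F M &&
    decide (∃ B' ∈ cands (X \ (undirect M ∪ B)), blockF F X n M (B ∪ B') = true)

lemma blockF_sound (F : Finset (V × V) → Prop) [DecidablePred F] (X : Finset (Sym2 V)) :
    ∀ n (M : Finset (V × V)) (B : Finset (Sym2 V)),
      blockF (fun M => decide (F M)) X n M B = true → OBreakerBlock X F 1 M B := by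
  intro n
  induction n with
  | zero => intro M B h; simp [blockF] at h
  | succ n ih =>
    intro M B h
    rw [blockF, Bool.and_eq_true, Bool.not_eq_true', decide_eq_false_iff_not,
      decide_eq_true_eq] at h
    obtain ⟨hF, h2⟩ := h
    classical
    choose B' hB'mem hB'rec using h2
    refine OBreakerBlock.step M B hF
      (fun x y => if h : s(x, y) ∈ X ∧ s(x, y) ∉ undirect M ∪ B
        then B' (x, y) h.1 h.2 else ∅) ?_ ?_ ?_
    · intro x y hx hy
      simp only [dif_pos (And.intro hx hy)]
      exact (cands_spec (hB'mem (x, y) hx hy)).1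
    · intro x y hx hy
      simp only [dif_pos (And.intro hx hy)]
      exact (cands_spec (hB'mem (x, y) hx hy)).2
    · intro x y hx hy
      simp only [dif_pos (And.intro hx hy)]
      exact ih _ _ (hB'rec (x, y) hx hy)

lemma turnF_sound (F : Finset (V × V) → Prop) [DecidablePred F] (X : Finset (Sym2 V))
    (n : ℕ) (M : Finset (V × V)) (B : Finset (Sym2 V))
    (h : turnF (fun M => decide (F M)) X n M B = true) : OBreakerTurn X F 1 M B := by
  rw [turnF, Bool.and_eq_true, Bool.not_eq_true', decide_eq_false_iff_not,
    decide_eq_true_eq] at h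
  obtain ⟨hF, B', hmem, hrec⟩ := h
  obtain ⟨hsub, hcard⟩ := cands_spec hmem
  exact ⟨hF, B', hsub, hcard, blockF_sound F X n M (B ∪ B') hrec⟩

instance (M : Finset (V × V)) [Fintype V] : Decidable (HasCyclicTriangle M) := by
  unfold HasCyclicTriangle; infer_instance

end Aux


section Sym

/-- Action on oriented edges: permute vertices by `σ`; if `ε`, also reverse direction. -/
def τ (σ : Equiv.Perm V) (ε : Bool) (p : V × V) : V × V :=
  if ε then (σ p.2, σ p.1) else (σ p.1, σ p.2)

lemma tau_left_inv (σ : Equiv.Perm V) (ε : Bool) (p : V × V) :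
    τ σ ε (τ σ.symm ε p) = p := by
  cases ε <;> simp [τ]

lemma sym2_map_tau (σ : Equiv.Perm V) (ε : Bool) (p : V × V) :
    Sym2.map σ s(p.1, p.2) = s((τ σ ε p).1, (τ σ ε p).2) := by
  obtain ⟨a, b⟩ := p
  cases ε <;> simp [τ, Sym2.map_pair_eq, Sym2.eq_swap]

lemma undirect_image (σ : Equiv.Perm V) (ε : Bool) (M : Finset (V × V)) :
    undirect (M.image (τ σ ε)) = (undirect M).image (Sym2.map σ) := by
  unfold undirect
  rw [Finset.image_image, Finset.image_image]
  congr 1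
  funext p
  exact (sym2_map_tau σ ε p).symm

lemma hasCyclic_image (σ : Equiv.Perm V) (ε : Bool) (M : Finset (V × V)) :
    HasCyclicTriangle (M.image (τ σ ε)) → HasCyclicTriangle M := by
  rintro ⟨x, y, z, hxy, hyz, hxz, h1, h2, h3⟩
  have mem : ∀ p : V × V, p ∈ M.image (τ σ ε) → τ σ.symm ε p ∈ M := by
    intro p hp
    obtain ⟨q, hq, rfl⟩ := Finset.mem_image.mp hp
    have hqq : τ σ.symm ε (τ σ ε q) = q := by cases ε <;> simp [τ]
    rwa [hqq]
  have h1' := mem _ h1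
  have h2' := mem _ h2
  have h3' := mem _ h3
  have inj : Function.Injective (σ.symm : V → V) := σ.symm.injective
  cases ε
  · exact ⟨σ.symm x, σ.symm y, σ.symm z, inj.ne hxy, inj.ne hyz, inj.ne hxz,
      by simpa [τ] using h1', by simpa [τ] using h2', by simpa [τ] using h3'⟩
  · exact ⟨σ.symm x, σ.symm z, σ.symm y, inj.ne hxz, inj.ne hyz.symm, inj.ne hxy,
      by simpa [τ] using h3', by simpa [τ] using h2', by simpa [τ] using h1'⟩

lemma OBreakerBlock_image (σ : Equiv.Perm V) (ε : Bool) {X : Finset (Sym2 V)}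
    {M : Finset (V × V)} {B : Finset (Sym2 V)}
    (h : OBreakerBlock X HasCyclicTriangle 1 M B) :
    OBreakerBlock (X.image (Sym2.map σ)) HasCyclicTriangle 1
      (M.image (τ σ ε)) (B.image (Sym2.map σ)) := by
  have minj : Function.Injective (Sym2.map (σ : V → V)) := Sym2.map.injective σ.injective
  induction h with
  | step M B hF resp hsub hcard h ih =>
    have trans : ∀ x y : V, s(x, y) ∈ X.image (Sym2.map σ) →
        s(x, y) ∉ undirect (M.image (τ σ ε)) ∪ B.image (Sym2.map σ) →
        ∃ a b : V, τ σ ε (a, b) = (x, y) ∧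
          (τ σ.symm ε (x, y)).1 = a ∧ (τ σ.symm ε (x, y)).2 = b ∧
          s(a, b) ∈ X ∧ s(a, b) ∉ undirect M ∪ B ∧
          (X \ (insert s(a, b) (undirect M) ∪ B)).image (Sym2.map σ) =
            X.image (Sym2.map σ) \
              (insert s(x, y) (undirect (M.image (τ σ ε))) ∪ B.image (Sym2.map σ)) := by
      intro x y hXmem hfree
      have hfq : τ σ ε ((τ σ.symm ε (x, y)).1, (τ σ.symm ε (x, y)).2) = (x, y) := by
        rw [Prod.mk.eta]; exact tau_left_inv σ ε (x, y)
      have hsq : Sym2.map σ s((τ σ.symm ε (x, y)).1, (τ σ.symm ε (x, y)).2) = s(x, y) := by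
        rw [sym2_map_tau σ ε, tau_left_inv]
      refine ⟨(τ σ.symm ε (x, y)).1, (τ σ.symm ε (x, y)).2, hfq, rfl, rfl, ?_, ?_, ?_⟩
      · rw [← hsq] at hXmem
        exact minj.mem_finset_image.mp hXmem
      · intro hc
        apply hfree
        rw [undirect_image, ← Finset.image_union, ← hsq]
        exact Finset.mem_image_of_mem _ hc
      · rw [Finset.image_sdiff _ _ minj, Finset.image_union,
          Finset.image_insert, undirect_image, hsq]
    refine OBreakerBlock.step _ _ (fun hc => hF (hasCyclic_image σ ε M hc))
      (fun x y => (resp (τ σ.symm ε (x, y)).1 (τ σ.symm ε (x, y)).2).image (Sym2.map σ))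
      ?_ ?_ ?_ <;>
      intro x y hXmem hfree <;>
      obtain ⟨a, b, hfq, ha, hb, hX', hfree', hsd⟩ := trans x y hXmem hfree <;>
      rw [ha, hb]
    · rw [← hsd]
      exact Finset.image_subset_image (hsub a b hX' hfree')
    · rw [← hsd, Finset.card_image_of_injective _ minj, Finset.card_image_of_injective _ minj]
      exact hcard a b hX' hfree'
    · have := ih a b hX' hfree'
      rw [Finset.image_union, Finset.image_insert, hfq] at this
      exact this

lemma OBreakerTurn_image (σ : Equiv.Perm V) (ε : Bool) {X : Finset (Sym2 V)}
    {M : Finset (V × V)} {B : Finset (Sym2 V)}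
    (h : OBreakerTurn X HasCyclicTriangle 1 M B) :
    OBreakerTurn (X.image (Sym2.map σ)) HasCyclicTriangle 1
      (M.image (τ σ ε)) (B.image (Sym2.map σ)) := by
  have minj : Function.Injective (Sym2.map (σ : V → V)) := Sym2.map.injective σ.injective
  obtain ⟨hF, B', hsub, hcard, hblock⟩ := h
  have hsd : (X \ (undirect M ∪ B)).image (Sym2.map σ) =
      X.image (Sym2.map σ) \ (undirect (M.image (τ σ ε)) ∪ B.image (Sym2.map σ)) := by
    rw [Finset.image_sdiff _ _ minj, Finset.image_union, undirect_image]
  refine ⟨fun hc => hF (hasCyclic_image σ ε M hc), B'.image (Sym2.map σ), ?_, ?_, ?_⟩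
  · rw [← hsd]
    exact Finset.image_subset_image hsub
  · rw [← hsd, Finset.card_image_of_injective _ minj, Finset.card_image_of_injective _ minj]
    exact hcard
  · have := OBreakerBlock_image σ ε hblock
    rwa [Finset.image_union] at this

lemma completeEdges_image (σ : Equiv.Perm (Fin 4)) :
    (completeEdges 4).image (Sym2.map σ) = completeEdges 4 := by
  ext e
  simp only [completeEdges, Finset.mem_image, Finset.mem_filter, Finset.mem_univ, true_and]
  constructor
  · rintro ⟨e', he', rfl⟩
    rwa [Sym2.isDiag_map σ.injective]
  · intro he
    refine ⟨Sym2.map σ.symm e, ?_, ?_⟩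
    · rwa [Sym2.isDiag_map σ.symm.injective]
    · rw [Sym2.map_map]
      rw [show ((σ : Fin 4 → Fin 4) ∘ (σ.symm : Fin 4 → Fin 4)) = id from
        funext fun v => σ.apply_symm_apply v, Sym2.map_id, id_eq]

end Sym

/-- The three canonical first double-moves of Maker, up to symmetry. -/
def canon : Fin 3 → Finset (Fin 4 × Fin 4) :=
  ![{(0, 1), (1, 2)}, {(0, 1), (2, 1)}, {(0, 1), (2, 3)}]

set_option maxRecDepth 1000000 in
set_option maxHeartbeats 10000000 in
lemma canon_turn (i : Fin 3) :
    OBreakerTurn (completeEdges 4) HasCyclicTriangle 1 (canon i) ∅ := by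
  refine turnF_sound HasCyclicTriangle (completeEdges 4) 3 _ _ ?_
  fin_cases i <;> decide

set_option maxRecDepth 1000000 in
set_option maxHeartbeats 40000000 in
lemma cover : ∀ x₁ y₁ x₂ y₂ : Fin 4, x₁ ≠ y₁ → x₂ ≠ y₂ → s(x₁, y₁) ≠ s(x₂, y₂) →
    ∃ σ : Equiv.Perm (Fin 4), ∃ ε : Bool, ∃ i : Fin 3,
      ({(x₁, y₁), (x₂, y₂)} : Finset (Fin 4 × Fin 4)) = (canon i).image (τ σ ε) := by
  decide

/-- On `K₄`, Breaker prevents cyclic triangles in the unbiased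
`T_C`-tournament game, even if Maker claims and orients two edges in her first turn. -/
theorem breaker_blocks_K4 :
    ∀ x₁ y₁ x₂ y₂ : Fin 4, x₁ ≠ y₁ → x₂ ≠ y₂ → s(x₁, y₁) ≠ s(x₂, y₂) →
      OBreakerTurn (completeEdges 4) HasCyclicTriangle 1 {(x₁, y₁), (x₂, y₂)} ∅ := by
  intro x₁ y₁ x₂ y₂ h1 h2 h3
  obtain ⟨σ, ε, i, hM⟩ := cover x₁ y₁ x₂ y₂ h1 h2 h3
  rw [hM, ← completeEdges_image σ, show (∅ : Finset (Sym2 (Fin 4))) =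
    (∅ : Finset (Sym2 (Fin 4))).image (Sym2.map σ) from (Finset.image_empty _).symm]
  exact OBreakerTurn_image σ ε (canon_turn i)


end TournamentGame
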